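/- Let A be an n×n real matrix that is Lyapunov stable, i.e., there exists an n×n real positive definite matrix V with A V + V Aᵀ negative definite, and let L be an n×m real matrix with linearly independent columns (so m ≤ n). Then there exist real matrices P of size (n−m)×n, P̄ of size m×n, P† of size n×(n−m), and P̄† of size n×m such that: (C0) P P† = I_{n−m} and P̄ P̄† = I_m (P and P̄ are right-invertible with right-inverses P† and P̄†); (C1) P† P + P̄† P̄ = I_n; (C2) P A P† + (P A P†)ᵀ and P̄ A P̄† + (P̄ A P̄†)ᵀ are negative definite, so in particular every complex eigenvalue of P A P† and of P̄ A P̄† has negative real part; (C3) P L = 0 and P̄ L is invertible. -/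

import Mathlib

open scoped RealInnerProductSpace


open Matrix

lemma myPosDef_conj {n k : ℕ} {N : Matrix (Fin n) (Fin n) ℝ} (hN : N.PosDef)
    (B : Matrix (Fin n) (Fin k) ℝ) (hB : ∀ x, B *ᵥ x = 0 → x = 0) :
    (Bᵀ * N * B).PosDef := by
  refine posDef_iff_dotProduct_mulVec.mpr ⟨?_, ?_⟩
  · have h := hN.1
    rw [IsHermitian, conjTranspose_eq_transpose_of_trivial] at h ⊢
    rw [transpose_mul, transpose_mul, transpose_transpose, h]
    exact (Matrix.mul_assoc _ _ _).symm
  · intro x hx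
    have hBx : B *ᵥ x ≠ 0 := fun h => hx (hB x h)
    have := hN.dotProduct_mulVec_pos hBx
    simpa [star_trivial, mul_assoc, mulVec_mulVec, ← mulVec_mulVec, dotProduct_mulVec,
      vecMul_transpose] using this

lemma myPosDef_complexify {k : ℕ} {N : Matrix (Fin k) (Fin k) ℝ} (hN : N.PosDef)
    {v : Fin k → ℂ} (hv : v ≠ 0) :
    0 < (star v ⬝ᵥ (N.map (algebraMap ℝ ℂ)) *ᵥ v).re := by
  set x : Fin k → ℝ := fun i => (v i).re with hx
  set y : Fin k → ℝ := fun i => (v i).im with hy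
  have hsum : (star v ⬝ᵥ (N.map (algebraMap ℝ ℂ)) *ᵥ v).re
      = star x ⬝ᵥ N *ᵥ x + star y ⬝ᵥ N *ᵥ y := by
    have h1 : star v ⬝ᵥ (N.map (algebraMap ℝ ℂ)) *ᵥ v
        = ∑ i, ∑ j, (starRingEnd ℂ) (v i) * ((N i j : ℂ) * v j) := by
      simp [dotProduct, mulVec, Finset.mul_sum, Complex.coe_algebraMap]
    rw [h1, Complex.re_sum]
    simp only [Complex.re_sum, Complex.mul_re, Complex.conj_re, Complex.conj_im,
      Complex.ofReal_re, Complex.ofReal_im]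
    simp only [dotProduct, mulVec, star_trivial, Finset.mul_sum]
    rw [← Finset.sum_add_distrib]
    refine Finset.sum_congr rfl fun i _ => ?_
    rw [← Finset.sum_add_distrib]
    refine Finset.sum_congr rfl fun j _ => ?_
    simp [Complex.mul_im, hx, hy]
  have hxy : x ≠ 0 ∨ y ≠ 0 := by
    by_contra h
    push_neg at h
    apply hv
    funext i
    have h1 : x i = 0 := by rw [h.1]; rfl
    have h2 : y i = 0 := by rw [h.2]; rfl
    exact Complex.ext h1 h2
  rw [hsum]
  rcases hxy with h | h
  · have := hN.dotProduct_mulVec_pos h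
    have := hN.posSemidef.dotProduct_mulVec_nonneg y
    linarith
  · have := hN.dotProduct_mulVec_pos h
    have := hN.posSemidef.dotProduct_mulVec_nonneg x
    linarith
lemma myHurwitz {k : ℕ} (M : Matrix (Fin k) (Fin k) ℝ) (h : (-(M + Mᵀ)).PosDef) :
    ∀ μ ∈ spectrum ℂ (M.map (algebraMap ℝ ℂ)), μ.re < 0 := by
  intro μ hμ
  set Mc := M.map (algebraMap ℝ ℂ) with hMc
  rw [spectrum.mem_iff, Matrix.isUnit_iff_isUnit_det, isUnit_iff_ne_zero, not_not] at hμ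
  obtain ⟨v, hv, hveq⟩ := (Matrix.exists_mulVec_eq_zero_iff).2 hμ
  have heig : Mc *ᵥ v = μ • v := by
    rw [sub_mulVec, sub_eq_zero, Algebra.algebraMap_eq_smul_one, smul_mulVec,
      one_mulVec] at hveq
    exact hveq.symm
  set t := star v ⬝ᵥ v with ht
  have ht_pos : 0 < t.re := by
    have := myPosDef_complexify (Matrix.PosDef.one (n := Fin k) (R := ℝ)) hv
    simpa using this
  have h1 : star v ⬝ᵥ Mc *ᵥ v = μ * t := by
    rw [heig, dotProduct_smul, ht, smul_eq_mul]
  have hstarM : Mc *ᵥ star v = star (Mc *ᵥ v) := by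
    funext i
    simp only [mulVec, dotProduct, Pi.star_apply, star_sum, star_mul']
    refine Finset.sum_congr rfl fun j _ => ?_
    simp [hMc, Complex.conj_ofReal]
  have h2 : star v ⬝ᵥ Mcᵀ *ᵥ v = (starRingEnd ℂ) μ * t := by
    rw [dotProduct_mulVec, vecMul_transpose, hstarM, heig]
    simp only [star_smul, smul_dotProduct, smul_eq_mul, ht]
    rfl
  have hmapN : (-(M + Mᵀ)).map (algebraMap ℝ ℂ) = -(Mc + Mcᵀ) := by
    ext i j
    simp [hMc, Matrix.map_apply]
  have hq := myPosDef_complexify h hv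
  rw [hmapN] at hq
  have hcomp : (star v ⬝ᵥ (-(Mc + Mcᵀ)) *ᵥ v).re = -(2 * μ.re) * t.re := by
    rw [neg_mulVec, dotProduct_neg, add_mulVec, dotProduct_add, h1, h2, ← add_mul,
      Complex.add_conj, Complex.neg_re, Complex.re_ofReal_mul]
    ring
  rw [hcomp] at hq
  nlinarith

lemma exists_orthonormal_frame {n m : ℕ} (hm : m ≤ n) (Lt : Matrix (Fin n) (Fin m) ℝ)
    (hLt : LinearIndependent ℝ (fun j : Fin m => Ltᵀ j)) :
    ∃ (Q : Matrix (Fin n) (Fin m) ℝ) (Qp : Matrix (Fin n) (Fin (n - m)) ℝ),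
      Qᵀ * Q = 1 ∧ Qpᵀ * Qp = 1 ∧ Q * Qᵀ + Qp * Qpᵀ = 1 ∧
      Qpᵀ * Lt = 0 ∧ IsUnit (Qᵀ * Lt) := by
  classical
  have inner_formula : ∀ u v : EuclideanSpace ℝ (Fin n), ⟪u, v⟫ = ∑ i, u i * v i :=
    fun u v => by
      simp [PiLp.inner_apply, RCLike.inner_apply, conj_trivial]
      exact Finset.sum_congr rfl fun _ _ => mul_comm _ _
  set ℓ : Fin m → EuclideanSpace ℝ (Fin n) := fun j => WithLp.toLp 2 (Ltᵀ j) with hℓ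
  have hli : LinearIndependent ℝ ℓ :=
    hLt.map' (WithLp.linearEquiv 2 ℝ (Fin n → ℝ)).symm.toLinearMap (LinearEquiv.ker _)
  set S : Submodule ℝ (EuclideanSpace ℝ (Fin n)) := Submodule.span ℝ (Set.range ℓ) with hSdef
  have hS : Module.finrank ℝ S = m := by
    rw [finrank_span_eq_card hli, Fintype.card_fin]
  have hS' : Module.finrank ℝ Sᗮ = n - m := by
    have h1 := Submodule.finrank_add_finrank_orthogonal (K := S)
    rw [hS, finrank_euclideanSpace_fin] at h1
    omega
  set b1 : OrthonormalBasis (Fin m) ℝ S :=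
    (stdOrthonormalBasis ℝ S).reindex (finCongr hS) with hb1
  set b2 : OrthonormalBasis (Fin (n - m)) ℝ Sᗮ :=
    (stdOrthonormalBasis ℝ Sᗮ).reindex (finCongr hS') with hb2
  set q : Fin m → EuclideanSpace ℝ (Fin n) := fun j => (b1 j : EuclideanSpace ℝ (Fin n)) with hq
  set p : Fin (n - m) → EuclideanSpace ℝ (Fin n) := fun j => (b2 j : EuclideanSpace ℝ (Fin n)) with hp
  have hqq : ∀ a b, ⟪q a, q b⟫ = if a = b then 1 else 0 := by
    intro a b
    have := orthonormal_iff_ite.mp b1.orthonormal a b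
    rwa [Submodule.coe_inner] at this
  have hpp : ∀ a b, ⟪p a, p b⟫ = if a = b then 1 else 0 := by
    intro a b
    have := orthonormal_iff_ite.mp b2.orthonormal a b
    rwa [Submodule.coe_inner] at this
  have hqp : ∀ a b, ⟪q a, p b⟫ = 0 := fun a b =>
    Submodule.inner_right_of_mem_orthogonal (SetLike.coe_mem (b1 a)) (SetLike.coe_mem (b2 b))
  have hlp : ∀ j a, ⟪ℓ j, p a⟫ = 0 := fun j a =>
    Submodule.inner_right_of_mem_orthogonal
      (Submodule.subset_span (Set.mem_range_self j)) (SetLike.coe_mem (b2 a))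
  set Q : Matrix (Fin n) (Fin m) ℝ := Matrix.of fun i a => q a i with hQ
  set Qp : Matrix (Fin n) (Fin (n - m)) ℝ := Matrix.of fun i a => p a i with hQp
  have h1 : Qᵀ * Q = 1 := by
    ext a b
    rw [Matrix.mul_apply, Matrix.one_apply, ← hqq a b, inner_formula]
    simp [hQ]
  have h2 : Qpᵀ * Qp = 1 := by
    ext a b
    rw [Matrix.mul_apply, Matrix.one_apply, ← hpp a b, inner_formula]
    simp [hQp]
  -- the combined orthonormal family
  set e : Fin m ⊕ Fin (n - m) ≃ Fin n :=
    finSumFinEquiv.trans (finCongr (Nat.add_sub_cancel' hm)) with he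
  set c : Fin m ⊕ Fin (n - m) → EuclideanSpace ℝ (Fin n) := Sum.elim q p with hc
  have hcc : ∀ a b, ⟪c a, c b⟫ = if a = b then 1 else 0 := by
    rintro (a | a) (b | b)
    · simpa [hc] using hqq a b
    · simpa [hc] using hqp a b
    · have hthis := hqp b a
      rw [real_inner_comm] at hthis
      simpa [hc] using hthis
    · simpa [hc] using hpp a b
  set U : Matrix (Fin n) (Fin n) ℝ := Matrix.of fun i j => c (e.symm j) i with hU
  have hUU : Uᵀ * U = 1 := by
    ext a b
    rw [Matrix.mul_apply, Matrix.one_apply]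
    simp only [hU, Matrix.transpose_apply, Matrix.of_apply]
    rw [← inner_formula, hcc]
    simp [e.symm.injective.eq_iff]
  have hUU2 : U * Uᵀ = 1 := mul_eq_one_comm.mp hUU
  have h3 : Q * Qᵀ + Qp * Qpᵀ = 1 := by
    ext i i'
    rw [← hUU2]
    simp only [Matrix.add_apply, Matrix.mul_apply, hQ, hQp, hU, Matrix.of_apply,
      Matrix.transpose_apply]
    have hre : ∑ k : Fin m ⊕ Fin (n - m), c k i * c k i'
        = ∑ x : Fin n, c (e.symm x) i * c (e.symm x) i' :=
      Fintype.sum_equiv e (fun k => c k i * c k i')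
        (fun x => c (e.symm x) i * c (e.symm x) i') (fun k => by simp)
    rw [← hre, Fintype.sum_sum_type]
    simp [hc]
  have h4 : Qpᵀ * Lt = 0 := by
    ext a j
    have hthis := hlp j a
    rw [inner_formula] at hthis
    simp only [Matrix.mul_apply, Matrix.transpose_apply, hQp, Matrix.of_apply,
      Matrix.zero_apply]
    rw [← hthis]
    exact Finset.sum_congr rfl fun i _ => by simp [hℓ, mul_comm]
  have h5 : IsUnit (Qᵀ * Lt) := by
    rw [Matrix.isUnit_iff_isUnit_det, isUnit_iff_ne_zero]
    intro hdet
    obtain ⟨x, hx0, hx⟩ := Matrix.exists_mulVec_eq_zero_iff.mpr hdet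
    have hrec : Q * (Qᵀ * Lt) = Lt := by
      have h0 : Qp * (Qpᵀ * Lt) = 0 := by rw [h4, Matrix.mul_zero]
      calc Q * (Qᵀ * Lt) = Q * (Qᵀ * Lt) + Qp * (Qpᵀ * Lt) := by rw [h0, add_zero]
        _ = (Q * Qᵀ + Qp * Qpᵀ) * Lt := by
            rw [Matrix.add_mul, Matrix.mul_assoc, Matrix.mul_assoc]
        _ = Lt := by rw [h3, Matrix.one_mul]
    have hLtx : Lt *ᵥ x = 0 := by
      rw [← hrec, ← Matrix.mulVec_mulVec, hx, Matrix.mulVec_zero]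
    have hsum : ∑ j, x j • ℓ j = 0 := by
      ext i
      calc (∑ j, x j • ℓ j) i = ∑ j, x j * Lt i j := by
            rw [WithLp.ofLp_sum, Finset.sum_apply]
            simp [hℓ]
        _ = (Lt *ᵥ x) i := by simp [Matrix.mulVec, dotProduct, mul_comm]
        _ = 0 := by rw [hLtx]; rfl
    have hzero := Fintype.linearIndependent_iff.mp hli x hsum
    exact hx0 (funext hzero)
  exact ⟨Q, Qp, h1, h2, h3, h4, h5⟩
/-- Lemma 3 (lemP) of the paper: if `A` is Lyapunov stable and `L` has linearly independent
columns, there exist right-invertible `P`, `P̄` with right-inverses `P†`, `P̄†` such that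
`P† P + P̄† P̄ = I`, the compressions `P A P†` and `P̄ A P̄†` have negative definite symmetric
parts (hence Hurwitz), `P L = 0`, and `P̄ L` is invertible. -/
theorem stmt_3 (n m : ℕ) (hm : m ≤ n)
    (A : Matrix (Fin n) (Fin n) ℝ) (L : Matrix (Fin n) (Fin m) ℝ)
    (hLyap : ∃ V : Matrix (Fin n) (Fin n) ℝ, V.PosDef ∧ (-(A * V + V * Aᵀ)).PosDef)
    (hL : LinearIndependent ℝ (fun j : Fin m => Lᵀ j)) :
    ∃ (P : Matrix (Fin (n - m)) (Fin n) ℝ) (Pbar : Matrix (Fin m) (Fin n) ℝ)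
      (Pdag : Matrix (Fin n) (Fin (n - m)) ℝ) (Pbardag : Matrix (Fin n) (Fin m) ℝ),
      -- (C0) right-invertibility
      P * Pdag = 1 ∧ Pbar * Pbardag = 1 ∧
      -- (C1)
      Pdag * P + Pbardag * Pbar = 1 ∧
      -- (C2) negative definite symmetric parts
      (-(P * A * Pdag + (P * A * Pdag)ᵀ)).PosDef ∧
      (-(Pbar * A * Pbardag + (Pbar * A * Pbardag)ᵀ)).PosDef ∧
      -- (C2) in particular, Hurwitz stability
      (∀ μ ∈ spectrum ℂ ((P * A * Pdag).map (algebraMap ℝ ℂ)), μ.re < 0) ∧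
      (∀ μ ∈ spectrum ℂ ((Pbar * A * Pbardag).map (algebraMap ℝ ℂ)), μ.re < 0) ∧
      -- (C3)
      P * L = 0 ∧ IsUnit (Pbar * L) := by
  obtain ⟨V, hV, hAV⟩ := hLyap
  obtain ⟨W, hWps, hWW⟩ : ∃ W : Matrix (Fin n) (Fin n) ℝ, W.PosSemidef ∧ W * W = V :=
    open scoped MatrixOrder in
    ⟨CFC.sqrt V, (CFC.sqrt_nonneg V).posSemidef, CFC.sqrt_mul_sqrt_self V hV.posSemidef.nonneg⟩
  have hWsym : Wᵀ = W := by
    have h := hWps.isHermitian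
    rwa [Matrix.IsHermitian, conjTranspose_eq_transpose_of_trivial] at h
  have hdetW : IsUnit W.det := by
    have hdd : W.det * W.det = V.det := by rw [← Matrix.det_mul, hWW]
    have hVdet := hV.det_pos
    rw [isUnit_iff_ne_zero]
    intro h
    rw [h, mul_zero] at hdd
    linarith [hdd ▸ hVdet]
  obtain ⟨Wi, hWWi, hWiW, hWisym⟩ :
      ∃ Wi : Matrix (Fin n) (Fin n) ℝ, W * Wi = 1 ∧ Wi * W = 1 ∧ Wiᵀ = Wi :=
    ⟨W⁻¹, Matrix.mul_nonsing_inv W hdetW, Matrix.nonsing_inv_mul W hdetW, by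
      rw [Matrix.transpose_nonsing_inv, hWsym]⟩
  have hWiinj : ∀ x, Wi *ᵥ x = 0 → x = 0 := by
    intro x hx
    have h : W *ᵥ (Wi *ᵥ x) = 0 := by rw [hx, Matrix.mulVec_zero]
    rwa [Matrix.mulVec_mulVec, hWWi, Matrix.one_mulVec] at h
  set At := Wi * A * W with hAt
  have hHpd : (Wiᵀ * (-(A * V + V * Aᵀ)) * Wi).PosDef := myPosDef_conj hAV Wi hWiinj
  rw [hWisym] at hHpd
  have hHeq : Wi * (-(A * V + V * Aᵀ)) * Wi = -(At + Atᵀ) := by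
    have hVWi : V * Wi = W := by rw [← hWW, Matrix.mul_assoc, hWWi, Matrix.mul_one]
    have hWiV : Wi * V = W := by rw [← hWW, ← Matrix.mul_assoc, hWiW, Matrix.one_mul]
    rw [hAt, Matrix.transpose_mul, Matrix.transpose_mul, hWsym, hWisym]
    rw [Matrix.mul_neg, Matrix.neg_mul]
    congr 1
    rw [Matrix.mul_add, Matrix.add_mul]
    congr 1
    · rw [Matrix.mul_assoc, Matrix.mul_assoc, hVWi, ← Matrix.mul_assoc]
    · rw [← Matrix.mul_assoc, ← Matrix.mul_assoc, hWiV, Matrix.mul_assoc]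
  rw [hHeq] at hHpd
  -- transformed input matrix
  set Lt := Wi * L with hLtdef
  have hLt : LinearIndependent ℝ (fun j : Fin m => Ltᵀ j) := by
    have hinj : Function.Injective Wi.mulVecLin := by
      intro x y hxy
      have h0 : Wi *ᵥ (x - y) = 0 := by
        rw [Matrix.mulVec_sub]
        simpa [Matrix.mulVecLin_apply] using sub_eq_zero.mpr hxy
      exact sub_eq_zero.mp (hWiinj _ h0)
    have hcomp : (fun j : Fin m => Ltᵀ j) = Wi.mulVecLin ∘ (fun j => Lᵀ j) := by
      funext j
      funext i
      simp [hLtdef, Matrix.mul_apply, Matrix.mulVec, dotProduct]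
    rw [hcomp]
    exact hL.map' Wi.mulVecLin (LinearMap.ker_eq_bot.mpr hinj)
  obtain ⟨Q, Qp, hQQ, hQpQp, hsum1, hQpLt, hQLt⟩ := exists_orthonormal_frame hm Lt hLt
  have key : ∀ {k l : ℕ} (X : Matrix (Fin k) (Fin n) ℝ) (Y : Matrix (Fin n) (Fin l) ℝ),
      (X * Wi) * (W * Y) = X * Y := by
    intro k l X Y
    rw [Matrix.mul_assoc, ← Matrix.mul_assoc Wi, hWiW, Matrix.one_mul]
  have hQinj : ∀ x, Q *ᵥ x = 0 → x = 0 := by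
    intro x hx
    have h : Qᵀ *ᵥ (Q *ᵥ x) = 0 := by rw [hx, Matrix.mulVec_zero]
    rwa [Matrix.mulVec_mulVec, hQQ, Matrix.one_mulVec] at h
  have hQpinj : ∀ x, Qp *ᵥ x = 0 → x = 0 := by
    intro x hx
    have h : Qpᵀ *ᵥ (Qp *ᵥ x) = 0 := by rw [hx, Matrix.mulVec_zero]
    rwa [Matrix.mulVec_mulVec, hQpQp, Matrix.one_mulVec] at h
  have hPA : (Qpᵀ * Wi) * A * (W * Qp) = Qpᵀ * At * Qp := by
    rw [hAt]; simp only [Matrix.mul_assoc]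
  have hPbarA : (Qᵀ * Wi) * A * (W * Q) = Qᵀ * At * Q := by
    rw [hAt]; simp only [Matrix.mul_assoc]
  have hc1 : -((Qpᵀ * Wi) * A * (W * Qp) + ((Qpᵀ * Wi) * A * (W * Qp))ᵀ)
      = Qpᵀ * (-(At + Atᵀ)) * Qp := by
    rw [hPA, Matrix.transpose_mul, Matrix.transpose_mul, Matrix.transpose_transpose,
      Matrix.mul_neg, Matrix.neg_mul, Matrix.mul_add, Matrix.add_mul]
    congr 2
    rw [Matrix.mul_assoc]
  have hc2 : -((Qᵀ * Wi) * A * (W * Q) + ((Qᵀ * Wi) * A * (W * Q))ᵀ)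
      = Qᵀ * (-(At + Atᵀ)) * Q := by
    rw [hPbarA, Matrix.transpose_mul, Matrix.transpose_mul, Matrix.transpose_transpose,
      Matrix.mul_neg, Matrix.neg_mul, Matrix.mul_add, Matrix.add_mul]
    congr 2
    rw [Matrix.mul_assoc]
  have hpd1 : (-((Qpᵀ * Wi) * A * (W * Qp) + ((Qpᵀ * Wi) * A * (W * Qp))ᵀ)).PosDef := by
    rw [hc1]
    exact myPosDef_conj hHpd Qp hQpinj
  have hpd2 : (-((Qᵀ * Wi) * A * (W * Q) + ((Qᵀ * Wi) * A * (W * Q))ᵀ)).PosDef := by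
    rw [hc2]
    exact myPosDef_conj hHpd Q hQinj
  refine ⟨Qpᵀ * Wi, Qᵀ * Wi, W * Qp, W * Q,
    by rw [key, hQpQp], by rw [key, hQQ], ?_, hpd1, hpd2,
    myHurwitz _ hpd1, myHurwitz _ hpd2,
    by rw [Matrix.mul_assoc, ← hLtdef]; exact hQpLt,
    by rw [Matrix.mul_assoc, ← hLtdef]; exact hQLt⟩
  simp only [Matrix.mul_assoc]
  rw [← Matrix.mul_add, ← Matrix.mul_assoc Qp, ← Matrix.mul_assoc Q, ← Matrix.add_mul,
    add_comm (Qp * Qpᵀ), hsum1, Matrix.one_mul, hWWi]
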